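/- On the reference tetrahedron K³, for each face f_{j1} = [j2,j3,j4] and each edge [k1,k2] of that face (k1 < k2, with k3 the remaining vertex of the face), all the second-kind edge-based face functions — Φ̃^0 = λ_{k1} ∇λ_{k2} × ∇λ_{k3}, Φ̃^1 = λ_{k1} λ_{k2} ∇λ_{k3} × ∇λ_{k1}, and Φ̃^{i+1} = ℓ_i(γ) Φ̃^1 + ℓ_{i−1}(γ) Φ̃^0 for i ≥ 1, where γ = λ_{k2} − λ_{k1} — have vanishing normal component on every face other than f_{j1}: for every jk ≠ j1, n^{f_{jk}} · Φ̃^{m} = 0 at every point of the face f_{jk}, for all m ≥ 0. -/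
import Mathlib


open MeasureTheory
open scoped BigOperators

noncomputable section

/-- Vertices of the reference tetrahedron:
`v0 = (0,0,0)`, `v1 = (1,0,0)`, `v2 = (0,1,0)`, `v3 = (0,0,1)`. -/
def vtx : Fin 4 → Fin 3 → ℝ := ![![0,0,0], ![1,0,0], ![0,1,0], ![0,0,1]]

/-- Barycentric coordinates `λ0 = 1−ξ−η−ζ`, `λ1 = ξ`, `λ2 = η`, `λ3 = ζ`. -/
def lam : Fin 4 → (Fin 3 → ℝ) → ℝ :=
  ![fun p => 1 - p 0 - p 1 - p 2, fun p => p 0, fun p => p 1, fun p => p 2]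

/-- The (constant) gradients `∇λ_i`. -/
def gradLam : Fin 4 → Fin 3 → ℝ := ![![-1,-1,-1], ![1,0,0], ![0,1,0], ![0,0,1]]

/-- The reference tetrahedron `K³ = {(ξ,η,ζ) : ξ,η,ζ ≥ 0, ξ+η+ζ ≤ 1}`. -/
def K3 : Set (Fin 3 → ℝ) := {p | 0 ≤ p 0 ∧ 0 ≤ p 1 ∧ 0 ≤ p 2 ∧ p 0 + p 1 + p 2 ≤ 1}

/-- Cross product in ℝ³. -/
def cross3 (u v : Fin 3 → ℝ) : Fin 3 → ℝ :=
  ![u 1 * v 2 - u 2 * v 1, u 2 * v 0 - u 0 * v 2, u 0 * v 1 - u 1 * v 0]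

/-- Euclidean norm in ℝ³. -/
def norm3 (u : Fin 3 → ℝ) : ℝ := Real.sqrt (∑ i, u i ^ 2)

/-- Euclidean dot product in ℝ³. -/
def dot3 (u v : Fin 3 → ℝ) : ℝ := ∑ i, u i * v i

/-- The unit vector in the direction of `u`. -/
def unitV (u : Fin 3 → ℝ) : Fin 3 → ℝ := (norm3 u)⁻¹ • u

/-- The outward unit normal of the face `f_j` of `K³` opposite the vertex
`v_j` (that face lies in the plane `λ_j = 0`): `n^{f_j} = −∇λ_j / |∇λ_j|`. -/
def nFace (j : Fin 4) : Fin 3 → ℝ := (norm3 (gradLam j))⁻¹ • (-(gradLam j))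

/-- The classical (un-normalized) Jacobi polynomial `P_n^{(a,b)}` in homogenized
(cleared-denominator) form: `jacobiHom n a b u w = w^n P_n^{(a,b)}(u/w)` for
`w ≠ 0`, via the explicit sum
`P_n^{(a,b)}(x) = ∑_{s} C(n+a, n−s) C(n+b, s) ((x−1)/2)^s ((x+1)/2)^{n−s}`. -/
def jacobiHom (n a b : ℕ) (u w : ℝ) : ℝ :=
  ∑ k ∈ Finset.range (n+1),
    (((n+a).choose (n-k) : ℝ)) * (((n+b).choose k : ℝ)) *
      ((u - w)/2)^k * ((u + w)/2)^(n-k)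

/-- The degree-`n` Legendre polynomial `ℓ_n` (normalized so `ℓ_n(1) = 1`). -/
def legendre (n : ℕ) (x : ℝ) : ℝ := jacobiHom n 0 0 x 1

/-- `Φ̃^0 = λ_{k1} ∇λ_{k2} × ∇λ_{k3}`. -/
def PhiSK0 (k1 k2 k3 : Fin 4) (p : Fin 3 → ℝ) : Fin 3 → ℝ :=
  lam k1 p • cross3 (gradLam k2) (gradLam k3)

/-- `Φ̃^1 = λ_{k1} λ_{k2} ∇λ_{k3} × ∇λ_{k1}`. -/
def PhiSK1 (k1 k2 k3 : Fin 4) (p : Fin 3 → ℝ) : Fin 3 → ℝ :=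
  (lam k1 p * lam k2 p) • cross3 (gradLam k3) (gradLam k1)

/-- The second-kind edge-based face functions: `Φ̃^0`, `Φ̃^1`, and for `i ≥ 1`
`Φ̃^{i+1} = ℓ_i(γ) Φ̃^1 + ℓ_{i−1}(γ) Φ̃^0` where `γ = λ_{k2} − λ_{k1}`. -/
def PhiSK (k1 k2 k3 : Fin 4) : ℕ → (Fin 3 → ℝ) → Fin 3 → ℝ
  | 0 => PhiSK0 k1 k2 k3
  | 1 => PhiSK1 k1 k2 k3
  | (i+2) => fun p =>
      legendre (i+1) (lam k2 p - lam k1 p) • PhiSK1 k1 k2 k3 p +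
      legendre i (lam k2 p - lam k1 p) • PhiSK0 k1 k2 k3 p

lemma dot3_smul_left (c : ℝ) (u v : Fin 3 → ℝ) : dot3 (c • u) v = c * dot3 u v := by
  simp [dot3, Fin.sum_univ_three]; ring

lemma dot3_neg_left (u v : Fin 3 → ℝ) : dot3 (-u) v = -dot3 u v := by
  simp [dot3, Fin.sum_univ_three]

lemma dot3_zero_right (u : Fin 3 → ℝ) : dot3 u 0 = 0 := by
  simp [dot3]

lemma dot3_smul_right (c : ℝ) (u v : Fin 3 → ℝ) : dot3 u (c • v) = c * dot3 u v := by
  simp [dot3, Fin.sum_univ_three]; ring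

lemma dot3_add_right (u v w : Fin 3 → ℝ) : dot3 u (v + w) = dot3 u v + dot3 u w := by
  simp [dot3, Fin.sum_univ_three]; ring

lemma dot3_cross_left (u w : Fin 3 → ℝ) : dot3 u (cross3 u w) = 0 := by
  simp [dot3, cross3, Fin.sum_univ_three]; ring

lemma dot3_cross_right (u w : Fin 3 → ℝ) : dot3 u (cross3 w u) = 0 := by
  simp [dot3, cross3, Fin.sum_univ_three]; ring

/-- every second-kind edge-based face function attached to the
face `f_{j1}` (with edge `[k1,k2]`, `k1 < k2`, and remaining vertex `k3`) has
vanishing normal component at every point of every face `f_{jk}` with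
`jk ≠ j1`. -/
theorem stmt11 : ∀ (j1 k1 k2 k3 : Fin 4), k1 ≠ j1 → k2 ≠ j1 → k3 ≠ j1 →
    k1 < k2 → k3 ≠ k1 → k3 ≠ k2 → ∀ m : ℕ, ∀ jk : Fin 4, jk ≠ j1 →
    ∀ p ∈ K3, lam jk p = 0 → dot3 (nFace jk) (PhiSK k1 k2 k3 m p) = 0 := by
  intro j1 k1 k2 k3 h1 h2 h3 hlt h31 h32 m jk hjk p hp hlam
  have hmem : jk = k1 ∨ jk = k2 ∨ jk = k3 := by
    clear hp hlam
    revert hjk h32 h31 hlt h3 h2 h1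
    revert jk k3 k2 k1 j1
    decide
  have h0 : dot3 (gradLam jk) (PhiSK0 k1 k2 k3 p) = 0 := by
    rcases hmem with rfl | rfl | rfl
    · simp [PhiSK0, dot3_smul_right, hlam, dot3_zero_right]
    · simp [PhiSK0, dot3_smul_right, dot3_cross_left]
    · simp [PhiSK0, dot3_smul_right, dot3_cross_right]
  have h1' : dot3 (gradLam jk) (PhiSK1 k1 k2 k3 p) = 0 := by
    rcases hmem with rfl | rfl | rfl
    · simp [PhiSK1, dot3_smul_right, hlam, dot3_zero_right]
    · simp [PhiSK1, dot3_smul_right, hlam, dot3_zero_right]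
    · simp [PhiSK1, dot3_smul_right, dot3_cross_left]
  have hn : ∀ v, dot3 (gradLam jk) v = 0 → dot3 (nFace jk) v = 0 := by
    intro v hv
    simp [nFace, dot3_smul_left, dot3_neg_left, hv]
  match m with
  | 0 => exact hn _ h0
  | 1 => exact hn _ h1'
  | (i+2) =>
    apply hn
    show dot3 (gradLam jk)
      (legendre (i+1) (lam k2 p - lam k1 p) • PhiSK1 k1 k2 k3 p +
       legendre i (lam k2 p - lam k1 p) • PhiSK0 k1 k2 k3 p) = 0
    rw [dot3_add_right, dot3_smul_right, dot3_smul_right, h0, h1']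
    ring
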